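/- Let α ≥ 0 and set d_k = 1 + α(k+1). Suppose f(z) = 1/z + Σ_{k≥1} a_k z^k satisfies Σ_{k≥1} d_k |a_k| ≤ 1. For n ≥ 1 let S_n(z) = 1/z + Σ_{k=1}^{n-1} a_k z^k. Then Re(S_n(z)/f(z)) > d_n/(1 + d_n) for all z in the punctured unit disc E. -/

import Mathlib

open Complex

private lemma stmt17_aux (d : ℝ) (hd : 1 ≤ d) (x : ℂ)
    (h : ‖(1+(d:ℂ)) * x - (1+(d:ℂ))‖ < ‖(1+(d:ℂ)) * x + (1-(d:ℂ))‖) :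
    d / (1 + d) < x.re := by
  have h2 : Complex.normSq ((1+(d:ℂ)) * x - (1+(d:ℂ))) <
      Complex.normSq ((1+(d:ℂ)) * x + (1-(d:ℂ))) := by
    rw [← Complex.sq_norm, ← Complex.sq_norm]
    exact pow_lt_pow_left₀ h (norm_nonneg _) two_ne_zero
  simp only [Complex.normSq_apply, Complex.sub_re, Complex.sub_im, Complex.add_re,
    Complex.add_im, Complex.mul_re, Complex.mul_im, Complex.ofReal_re, Complex.ofReal_im,
    Complex.one_re, Complex.one_im] at h2
  rw [div_lt_iff₀ (by linarith : (0:ℝ) < 1 + d)]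
  nlinarith [sq_nonneg x.im, h2]

theorem stmt17 (α : ℝ) (hα : 0 ≤ α) (a : ℕ → ℂ)
    (hSum : Summable fun k : ℕ => (1 + α * (k + 2)) * ‖a (k + 1)‖)
    (hb : (∑' k : ℕ, (1 + α * (k + 2)) * ‖a (k + 1)‖) ≤ 1)
    (f : ℂ → ℂ)
    (hf : ∀ z : ℂ, z ≠ 0 → f z = z⁻¹ + ∑' k : ℕ, a (k + 1) * z ^ (k + 1))
    (n : ℕ) (hn : 1 ≤ n)
    (S : ℂ → ℂ)
    (hS : ∀ z : ℂ, z ≠ 0 → S z = z⁻¹ + ∑ k ∈ Finset.Icc 1 (n - 1), a k * z ^ k) :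
    ∀ z : ℂ, 0 < ‖z‖ → ‖z‖ < 1 →
      (S z / f z).re > (1 + α * (n + 1)) / (1 + (1 + α * (n + 1))) := by
  intro z hz0 hz1
  have hz : z ≠ 0 := by
    intro h; rw [h] at hz0; simp at hz0
  set r := ‖z‖ with hr
  set d : ℝ := 1 + α * (n + 1) with hd_def
  have hd1 : (1:ℝ) ≤ d := by
    have h1 : (0:ℝ) ≤ α * (n+1) := by positivity
    simp only [hd_def]; linarith
  set m := n - 1 with hm
  have hnm : n = m + 1 := (Nat.succ_pred_eq_of_pos hn).symm
  -- basic summability facts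
  have habs_le : ∀ k : ℕ, ‖a (k+1)‖ ≤ (1 + α*(k+2)) * ‖a (k+1)‖ := by
    intro k
    have h1 : (0:ℝ) ≤ α*(k+2) := by positivity
    nlinarith [norm_nonneg (a (k+1))]
  have hsum_abs : Summable fun k : ℕ => ‖a (k+1)‖ :=
    Summable.of_nonneg_of_le (fun k => norm_nonneg _) habs_le hSum
  have hterm : ∀ k : ℕ, ‖a (k+1) * z^(k+1)‖ ≤ ‖a (k+1)‖ := by
    intro k
    rw [norm_mul, norm_pow]
    have h1 : ‖z‖^(k+1) ≤ 1 := pow_le_one₀ (norm_nonneg z) (le_of_lt hz1)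
    calc ‖a (k+1)‖ * ‖z‖^(k+1) ≤ ‖a (k+1)‖ * 1 := by
          exact mul_le_mul_of_nonneg_left h1 (norm_nonneg _)
      _ = ‖a (k+1)‖ := by rw [mul_one]
  have hsum_z : Summable fun k : ℕ => a (k+1) * z^(k+1) := by
    apply Summable.of_norm
    exact Summable.of_nonneg_of_le (fun k => norm_nonneg _) hterm hsum_abs
  -- definitions of the pieces
  set F : ℂ := ∑ k ∈ Finset.range m, a (k+1) * z^(k+1) with hF_def
  set G : ℂ := ∑' k : ℕ, a (k+m+1) * z^(k+m+1) with hG_def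
  have hsplit : (∑' k : ℕ, a (k+1) * z^(k+1)) = F + G := by
    rw [hF_def, hG_def]
    exact (Summable.sum_add_tsum_nat_add m hsum_z).symm
  set SA : ℝ := ∑ k ∈ Finset.range m, ‖a (k+1)‖ with hSA_def
  set SG : ℝ := ∑' k : ℕ, ‖a (k+m+1)‖ with hSG_def
  have hSA0 : 0 ≤ SA := Finset.sum_nonneg fun k _ => norm_nonneg _
  have hsum_absG : Summable fun k : ℕ => ‖a (k+m+1)‖ := by
    exact_mod_cast (summable_nat_add_iff m).2 hsum_abs
  have hSG0 : 0 ≤ SG := tsum_nonneg fun k => norm_nonneg _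
  -- the weighted coefficient inequality: SA + d * SG ≤ 1
  have hw : SA + d * SG ≤ 1 := by
    have hsplitw : (∑ k ∈ Finset.range m, (1 + α*(k+2)) * ‖a (k+1)‖)
        + (∑' k : ℕ, (1 + α*((k+m)+2)) * ‖a ((k+m)+1)‖)
        = ∑' k : ℕ, (1 + α*(k+2)) * ‖a (k+1)‖ := by
      exact_mod_cast Summable.sum_add_tsum_nat_add m hSum
    have h1 : SA ≤ ∑ k ∈ Finset.range m, (1 + α*(k+2)) * ‖a (k+1)‖ :=
      Finset.sum_le_sum fun k _ => habs_le k
    have h2 : d * SG ≤ ∑' k : ℕ, (1 + α*((k+m)+2)) * ‖a ((k+m)+1)‖ := by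
      rw [hSG_def, ← tsum_mul_left]
      apply Summable.tsum_le_tsum
      · intro k
        have hdle : d ≤ 1 + α*((k+m)+2) := by
          simp only [hd_def, hnm]
          push_cast
          nlinarith [hα, Nat.cast_nonneg (α := ℝ) k]
        have := norm_nonneg (a (k+m+1))
        nlinarith
      · exact hsum_absG.mul_left d
      · exact_mod_cast (summable_nat_add_iff m).2 hSum
    linarith
  -- norm bounds
  have hFb : ‖F‖ ≤ r * SA := by
    calc ‖F‖ ≤ ∑ k ∈ Finset.range m, ‖a (k+1) * z^(k+1)‖ :=
          norm_sum_le _ _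
      _ ≤ ∑ k ∈ Finset.range m, ‖a (k+1)‖ * r := by
          apply Finset.sum_le_sum
          intro k _
          rw [norm_mul, norm_pow]
          have h1 : r^(k+1) ≤ r := by
            calc r^(k+1) ≤ r^1 := pow_le_pow_of_le_one (norm_nonneg z) (le_of_lt hz1) (by omega)
              _ = r := pow_one r
          exact mul_le_mul_of_nonneg_left h1 (norm_nonneg _)
      _ = r * SA := by rw [hSA_def, Finset.mul_sum]; exact Finset.sum_congr rfl fun k _ => mul_comm _ _
  have hGb : ‖G‖ ≤ r * SG := by
    have h0 : Summable fun k : ℕ => ‖a (k+m+1) * z^(k+m+1)‖ := by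
      apply Summable.of_nonneg_of_le (fun k => norm_nonneg _) _ hsum_absG
      intro k
      rw [norm_mul, norm_pow]
      have h1 : ‖z‖^(k+m+1) ≤ 1 := pow_le_one₀ (norm_nonneg z) (le_of_lt hz1)
      calc ‖a (k+m+1)‖ * ‖z‖^(k+m+1) ≤ ‖a (k+m+1)‖ * 1 :=
            mul_le_mul_of_nonneg_left h1 (norm_nonneg _)
        _ = _ := by rw [mul_one]
    calc ‖G‖ ≤ ∑' k : ℕ, ‖a (k+m+1) * z^(k+m+1)‖ := by
          rw [hG_def]; exact norm_tsum_le_tsum_norm h0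
      _ ≤ ∑' k : ℕ, ‖a (k+m+1)‖ * r := by
          apply Summable.tsum_le_tsum _ h0 (hsum_absG.mul_right r)
          intro k
          rw [norm_mul, norm_pow]
          have h1 : ‖z‖^(k+m+1) ≤ r := by
            calc ‖z‖^(k+m+1) ≤ ‖z‖^1 := pow_le_pow_of_le_one (norm_nonneg z) (le_of_lt hz1) (by omega)
              _ = r := pow_one r
          exact mul_le_mul_of_nonneg_left h1 (norm_nonneg _)
      _ = r * SG := by rw [hSG_def, tsum_mul_right]; ring
  -- N and D
  set N : ℂ := 1 + z * F with hN_def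
  set D : ℂ := 1 + z * (F + G) with hD_def
  have hIcc : (∑ k ∈ Finset.Icc 1 m, a k * z^k) = F := by
    rw [← Finset.Ico_add_one_right_eq_Icc, Finset.sum_Ico_eq_sum_range]
    refine Finset.sum_congr rfl fun k _ => by rw [add_comm 1 k]
  have hNz : z * S z = N := by
    rw [hS z hz, hIcc, hN_def, mul_add, mul_inv_cancel₀ hz]
  have hDz : z * f z = D := by
    rw [hf z hz, hsplit, hD_def, mul_add, mul_inv_cancel₀ hz]
  have hzFG : ‖z * (F + G)‖ < 1 := by
    have h1 : ‖z * (F + G)‖ ≤ r * (‖F‖ + ‖G‖) := by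
      rw [norm_mul]
      exact mul_le_mul_of_nonneg_left (norm_add_le F G) (norm_nonneg z)
    have q1 : ‖F‖ + ‖G‖ ≤ r * SA + r * SG := by linarith
    have q2 : r * (‖F‖ + ‖G‖) ≤ r * (r * SA + r * SG) :=
      mul_le_mul_of_nonneg_left q1 hz0.le
    have hdSG : SG ≤ d * SG := le_mul_of_one_le_left hSG0 hd1
    have q3a : r * (r * SA + r * SG) = r^2 * (SA + SG) := by ring
    have q3b : r^2 * (SA + SG) ≤ r^2 * (SA + d * SG) :=
      mul_le_mul_of_nonneg_left (by linarith) (sq_nonneg r)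
    have q4 : r^2 * (SA + d * SG) ≤ r^2 := by
      calc r^2 * (SA + d * SG) ≤ r^2 * 1 := mul_le_mul_of_nonneg_left hw (sq_nonneg r)
        _ = r^2 := mul_one _
    have q5 : r^2 < 1 := pow_lt_one₀ (le_of_lt hz0) hz1 two_ne_zero
    linarith
  have hDne : D ≠ 0 := by
    intro h
    have h2 : z * (F + G) = -1 := by
      have h3 : (0:ℂ) = 1 + z * (F + G) := by rw [← h, hD_def]
      linear_combination -h3
    rw [h2] at hzFG
    simp at hzFG
  -- key strict inequality
  set e : ℂ := (d : ℂ) with he_def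
  have hNDdiff : (1+e) * (N - D) = -((1+e) * (z * G)) := by
    rw [hN_def, hD_def]; ring
  have hNDsum : (1+e) * N + (1-e) * D = 2 + z * (2 * F + (1-e) * G) := by
    rw [hN_def, hD_def]; ring
  have habs1e : ‖1+e‖ = 1 + d := by
    rw [he_def, show (1 + (d:ℂ)) = ((1+d : ℝ) : ℂ) by push_cast; ring, Complex.norm_real, Real.norm_eq_abs]
    exact abs_of_nonneg (by linarith)
  have habs1me : ‖1-e‖ = d - 1 := by
    rw [he_def, show (1 - (d:ℂ)) = ((1-d : ℝ) : ℂ) by push_cast; ring, Complex.norm_real, Real.norm_eq_abs,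
      abs_of_nonpos (by linarith)]
    ring
  have hkey : ‖(1+e) * (N - D)‖ < ‖(1+e) * N + (1-e) * D‖ := by
    have hL : ‖(1+e) * (N - D)‖ ≤ (1+d) * (r * (r * SG)) := by
      rw [hNDdiff, norm_neg, norm_mul, norm_mul, habs1e]
      have h4 : ‖z‖ * ‖G‖ ≤ r * (r * SG) :=
        mul_le_mul_of_nonneg_left hGb (le_of_lt hz0)
      exact mul_le_mul_of_nonneg_left h4 (by linarith : (0:ℝ) ≤ 1+d)
    have hR : 2 - r * (2 * (r * SA) + (d-1) * (r * SG)) ≤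
        ‖(1+e) * N + (1-e) * D‖ := by
      rw [hNDsum]
      have h1 : ‖z * (2 * F + (1-e) * G)‖ ≤ r * (2 * (r*SA) + (d-1)*(r*SG)) := by
        rw [norm_mul]
        apply mul_le_mul_of_nonneg_left _ (norm_nonneg z)
        calc ‖2 * F + (1-e) * G‖
            ≤ ‖2 * F‖ + ‖(1-e) * G‖ := norm_add_le _ _
          _ = 2 * ‖F‖ + (d-1) * ‖G‖ := by
              rw [norm_mul, norm_mul, habs1me]; norm_num
          _ ≤ 2 * (r*SA) + (d-1)*(r*SG) := by
              have h2 := mul_le_mul_of_nonneg_left hFb (by norm_num : (0:ℝ) ≤ 2)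
              have h3 := mul_le_mul_of_nonneg_left hGb (by linarith : (0:ℝ) ≤ d-1)
              linarith
      have h5 : ‖(2:ℂ)‖ - ‖z * (2 * F + (1-e) * G)‖ ≤ ‖(2:ℂ) + z * (2 * F + (1-e) * G)‖ := by
        have h5a := norm_sub_le ((2:ℂ) + z * (2 * F + (1-e) * G)) (z * (2 * F + (1-e) * G))
        rw [add_sub_cancel_right] at h5a
        linarith
      have h6 : ‖(2:ℂ)‖ = (2:ℝ) := by norm_num
      have h7 : ‖z * (2 * F + (1-e) * G)‖ = ‖z * (2 * F + (1-e) * G)‖ := rfl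
      have h8 : ‖(2:ℂ) + z * (2 * F + (1-e) * G)‖
          = ‖2 + z * (2 * F + (1-e) * G)‖ := rfl
      rw [h6, h7, h8] at h5
      linarith
    have q3 : r^2 * (SA + d * SG) ≤ r^2 := by
      calc r^2 * (SA + d * SG) ≤ r^2 * 1 := mul_le_mul_of_nonneg_left hw (sq_nonneg r)
        _ = r^2 := mul_one _
    have q5 : r^2 < 1 := pow_lt_one₀ (le_of_lt hz0) hz1 two_ne_zero
    have q4 : (1+d) * (r * (r * SG)) + r * (2 * (r * SA) + (d-1) * (r * SG))
        = 2 * (r^2 * (SA + d * SG)) := by ring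
    linarith
  -- conclude
  have hSf : S z / f z = N / D := by
    rw [← hNz, ← hDz, mul_div_mul_left _ _ hz]
  rw [gt_iff_lt, hSf]
  have hDpos : 0 < ‖D‖ := norm_pos_iff.mpr hDne
  have hx1 : ‖(1+e) * (N/D) - (1+e)‖ < ‖(1+e) * (N/D) + (1-e)‖ := by
    have e1 : (1+e) * (N - D) = ((1+e) * (N/D) - (1+e)) * D := by
      field_simp
    have e2 : (1+e) * N + (1-e) * D = ((1+e) * (N/D) + (1-e)) * D := by
      field_simp
    rw [e1, e2, norm_mul, norm_mul] at hkey
    exact lt_of_mul_lt_mul_right hkey (norm_nonneg D)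
  exact stmt17_aux d hd1 (N/D) hx1
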